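/- Grid Ramsey theorem: for all k, n ∈ ℕ there exists N ∈ ℕ such that for every coloring χ : ([N] × [N])² → [k] of pairs of grid points, there exist subsets I₁, I₂ ⊆ [N] with |I₁| = |I₂| = n such that the restriction of χ to pairs from I₁ × I₂ is homogeneous: χ((a₁,a₂),(b₁,b₂)) depends only on the pair (otp(a₁,b₁), otp(a₂,b₂)), where otp(x,y) ∈ {<, =, >} records the order relation of x and y. -/

import Mathlib

open Finset

/-- Homogeneity of a coloring of `r`-subsets on `H`. -/
def HomOn (r : ℕ) {C : Type} (f : Finset ℕ → C) (H : Finset ℕ) : Prop :=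
  ∀ s ⊆ H, ∀ t ⊆ H, s.card = r → t.card = r → f s = f t

theorem ramsey_step_count (s : Finset ℕ) (r : ℕ) :
    s.card ≤ (s.filter fun a => r ≤ (s.filter (a < ·)).card).card + r := by
  classical
  have key : (s.filter fun a => ¬ r ≤ (s.filter (a < ·)).card).card ≤ r := by
    have : ∀ a ∈ s.filter fun a => ¬ r ≤ (s.filter (a < ·)).card,
        (s.filter (a < ·)).card ∈ Finset.range r := by
      intro a ha
      simp only [mem_filter, not_le] at ha
      simpa using ha.2
    have hle := Finset.card_le_card_of_injOn (fun a => (s.filter (a < ·)).card) this ?_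
    · simpa using hle
    intro a ha b hb hab
    have hab' : (s.filter (a < ·)).card = (s.filter (b < ·)).card := hab
    clear hab
    simp only [coe_filter, Set.mem_setOf_eq] at ha hb
    by_contra hne
    rcases lt_or_gt_of_ne hne with h | h
    · have hsub : s.filter (b < ·) ⊆ (s.filter (a < ·)).erase b := by
        intro x hx
        simp only [mem_filter] at hx
        simp only [mem_erase, mem_filter]
        exact ⟨by omega, hx.1, by omega⟩
      have := Finset.card_le_card hsub
      rw [Finset.card_erase_of_mem (by simp [mem_filter]; exact ⟨hb.1, h⟩)] at this
      have hpos : 0 < (s.filter (a < ·)).card :=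
        Finset.card_pos.mpr ⟨b, by simp only [mem_filter]; exact ⟨hb.1, h⟩⟩
      omega
    · have hsub : s.filter (a < ·) ⊆ (s.filter (b < ·)).erase a := by
        intro x hx
        simp only [mem_filter] at hx
        simp only [mem_erase, mem_filter]
        exact ⟨by omega, hx.1, by omega⟩
      have := Finset.card_le_card hsub
      rw [Finset.card_erase_of_mem (by simp [mem_filter]; exact ⟨ha.1, h⟩)] at this
      have hpos : 0 < (s.filter (b < ·)).card :=
        Finset.card_pos.mpr ⟨a, by simp only [mem_filter]; exact ⟨ha.1, h⟩⟩
      omega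
  have := Finset.card_filter_add_card_filter_not
    (s := s) (p := fun a => r ≤ (s.filter (a < ·)).card)
  omega

theorem ramsey (r : ℕ) (C : Type) [Fintype C] (m : ℕ) :
    ∃ N, ∀ (f : Finset ℕ → C) (A : Finset ℕ), N ≤ A.card →
      ∃ H, H ⊆ A ∧ H.card = m ∧ HomOn r f H := by
  classical
  induction r generalizing C m with
  | zero =>
    refine ⟨m, fun f A hA => ?_⟩
    obtain ⟨H, hHA, hc⟩ := Finset.exists_subset_card_eq hA
    refine ⟨H, hHA, hc, fun s _ t _ hs ht => ?_⟩
    rw [Finset.card_eq_zero] at hs ht; rw [hs, ht]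
  | succ r IH =>
    -- chain construction
    have chain : ∀ j : ℕ, ∃ N, ∀ (f : Finset ℕ → C) (A : Finset ℕ), N ≤ A.card →
        ∃ P, P ⊆ A ∧ P.card = j ∧
          ∀ a ∈ P, ∀ s ⊆ P.filter (a < ·), ∀ t ⊆ P.filter (a < ·),
            s.card = r → t.card = r → f (insert a s) = f (insert a t) := by
      intro j
      induction j with
      | zero => exact ⟨0, fun f A _ => ⟨∅, by simp⟩⟩
      | succ j IHj =>
        obtain ⟨Nj, hNj⟩ := IHj
        obtain ⟨Nr, hNr⟩ := IH C Nj
        refine ⟨Nr + 1, fun f A hA => ?_⟩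
        have hAne : A.Nonempty := Finset.card_pos.mp (by omega)
        set a := A.min' hAne with ha
        have haA : a ∈ A := A.min'_mem hAne
        have hcard : Nr ≤ (A.erase a).card := by
          rw [Finset.card_erase_of_mem haA]; omega
        obtain ⟨B, hBA, hBc, hBhom⟩ := hNr (fun s => f (insert a s)) (A.erase a) hcard
        obtain ⟨P', hP'B, hP'c, hP'pre⟩ := hNj f B (le_of_eq hBc.symm)
        have halt : ∀ x ∈ P', a < x := by
          intro x hx
          have hxA : x ∈ A.erase a := hBA (hP'B hx)
          rw [Finset.mem_erase] at hxA
          exact lt_of_le_of_ne (A.min'_le x hxA.2) (Ne.symm hxA.1)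
        have haP' : a ∉ P' := fun h => lt_irrefl a (halt a h)
        refine ⟨insert a P', ?_, ?_, ?_⟩
        · intro x hx
          rcases Finset.mem_insert.mp hx with rfl | hx
          · exact haA
          · exact (Finset.erase_subset _ _) (hBA (hP'B hx))
        · rw [Finset.card_insert_of_notMem haP', hP'c]
        · intro b hb s hs t ht hsc htc
          rcases Finset.mem_insert.mp hb with rfl | hb
          · -- b = a : use homogeneity of B
            have hfil : (insert a P').filter (a < ·) ⊆ B := by
              intro x hx
              rw [Finset.mem_filter, Finset.mem_insert] at hx
              rcases hx.1 with rfl | h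
              · exact absurd hx.2 (lt_irrefl _)
              · exact hP'B h
            exact hBhom s (hs.trans hfil) t (ht.trans hfil) hsc htc
          · -- b ∈ P'
            have hfil : (insert a P').filter (b < ·) ⊆ P'.filter (b < ·) := by
              intro x hx
              rw [Finset.mem_filter, Finset.mem_insert] at hx
              rcases hx.1 with rfl | h
              · exact absurd (lt_trans (halt b hb) hx.2) (lt_irrefl _)
              · exact Finset.mem_filter.mpr ⟨h, hx.2⟩
            exact hP'pre b hb s (hs.trans hfil) t (ht.trans hfil) hsc htc
    -- now pigeonhole
    rcases isEmpty_or_nonempty C with hC | hC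
    · exact ⟨0, fun f A _ => (hC.false (f ∅)).elim⟩
    obtain ⟨Nch, hNch⟩ := chain (Fintype.card C * m + 1 + r)
    refine ⟨Nch, fun f A hA => ?_⟩
    obtain ⟨P, hPA, hPc, hPpre⟩ := hNch f A hA
    -- elements of P with at least r elements of P above them
    set P₀ := P.filter fun a => r ≤ (P.filter (a < ·)).card with hP₀
    have hP₀c : Fintype.card C * m < P₀.card := by
      have h := ramsey_step_count P r
      rw [← hP₀] at h
      omega
    -- color function
    have hpick : ∀ a ∈ P₀, ∃ s, s ⊆ P.filter (a < ·) ∧ s.card = r := by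
      intro a ha
      rw [hP₀, Finset.mem_filter] at ha
      exact Finset.exists_subset_card_eq ha.2
    choose pick hpick1 hpick2 using hpick
    classical
    let c : ℕ → C := fun a => if h : a ∈ P₀ then f (insert a (pick a h)) else Classical.arbitrary C
    obtain ⟨c₀, _, hc₀⟩ := Finset.exists_lt_card_fiber_of_mul_lt_card_of_maps_to
      (s := P₀) (t := Finset.univ) (f := c) (n := m) (fun a _ => Finset.mem_univ _) (by simpa using hP₀c)
    obtain ⟨H, hHsub, hHc⟩ := Finset.exists_subset_card_eq (le_of_lt hc₀)
    have hHP₀ : H ⊆ P₀ := hHsub.trans (Finset.filter_subset _ _)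
    have hHP : H ⊆ P := hHP₀.trans (Finset.filter_subset _ _)
    refine ⟨H, hHP.trans hPA, hHc, ?_⟩
    -- homogeneity: every (r+1)-subset of H has color c₀
    have key : ∀ s ⊆ H, s.card = r + 1 → f s = c₀ := by
      intro s hsH hsc
      have hsne : s.Nonempty := Finset.card_pos.mp (by omega)
      set b := s.min' hsne with hb
      have hbs : b ∈ s := s.min'_mem hsne
      have hbH : b ∈ H := hsH hbs
      have hbP₀ : b ∈ P₀ := hHP₀ hbH
      have herase : s.erase b ⊆ P.filter (b < ·) := by
        intro x hx
        rw [Finset.mem_erase] at hx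
        refine Finset.mem_filter.mpr ⟨hHP (hsH hx.2), ?_⟩
        exact lt_of_le_of_ne (s.min'_le x hx.2) (Ne.symm hx.1)
      have hec : (s.erase b).card = r := by
        rw [Finset.card_erase_of_mem hbs, hsc]; omega
      have h1 : f (insert b (s.erase b)) = f (insert b (pick b hbP₀)) :=
        hPpre b (hHP hbH) (s.erase b) herase (pick b hbP₀) (hpick1 b hbP₀) hec (hpick2 b hbP₀)
      rw [Finset.insert_erase hbs] at h1
      have h2 : c b = c₀ := by
        have := Finset.mem_filter.mp (hHsub hbH)
        exact this.2
      rw [h1]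
      rw [show c b = f (insert b (pick b hbP₀)) from dif_pos hbP₀] at h2
      exact h2
    intro s hs t ht hsc htc
    rw [key s hs hsc, key t ht htc]

open Finset in
theorem exists_bottom (s : Finset ℕ) : ∀ j, j ≤ s.card →
    ∃ t, t ⊆ s ∧ t.card = j ∧ ∀ x ∈ t, ∀ y ∈ s \ t, x < y := by
  intro j
  induction j with
  | zero => exact fun _ => ⟨∅, by simp⟩
  | succ j IH =>
    intro hj
    obtain ⟨t, hts, htc, htlt⟩ := IH (by omega)
    have hne : (s \ t).Nonempty := by
      rw [← Finset.card_pos, Finset.card_sdiff_of_subset hts]; omega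
    set m := (s \ t).min' hne with hm
    have hmmem : m ∈ s \ t := (s \ t).min'_mem hne
    have hmt : m ∉ t := (Finset.mem_sdiff.mp hmmem).2
    refine ⟨insert m t, ?_, ?_, ?_⟩
    · intro x hx
      rcases Finset.mem_insert.mp hx with rfl | hx
      · exact (Finset.mem_sdiff.mp hmmem).1
      · exact hts hx
    · rw [Finset.card_insert_of_notMem hmt, htc]
    · intro x hx y hy
      rw [Finset.mem_sdiff, Finset.mem_insert] at hy
      push_neg at hy
      rcases Finset.mem_insert.mp hx with rfl | hx
      · exact lt_of_le_of_ne ((s \ t).min'_le y (Finset.mem_sdiff.mpr ⟨hy.1, hy.2.2⟩))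
          (Ne.symm hy.2.1)
      · exact htlt x hx y (Finset.mem_sdiff.mpr ⟨hy.1, hy.2.2⟩)

theorem sort4 {w x y z : ℕ} (h1 : w < x) (h2 : x < y) (h3 : y < z) :
    Finset.sort ({w, x, y, z} : Finset ℕ) (· ≤ ·) = [w, x, y, z] := by
  have hz : Finset.sort ({z} : Finset ℕ) (· ≤ ·) = [z] := Finset.sort_singleton _ z
  have hy : Finset.sort ({y, z} : Finset ℕ) (· ≤ ·) = [y, z] := by
    rw [Finset.sort_insert (· ≤ ·) (by intro b hb; simp at hb; omega) (by simp; omega), hz]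
  have hx : Finset.sort ({x, y, z} : Finset ℕ) (· ≤ ·) = [x, y, z] := by
    rw [Finset.sort_insert (· ≤ ·) (by intro b hb; simp at hb; omega) (by simp; omega), hy]
  rw [Finset.sort_insert (· ≤ ·) (by intro b hb; simp at hb; omega) (by simp; omega), hx]

theorem sm4 {α} [Preorder α] {a b c d : α} (h1 : a < b) (h2 : b < c) (h3 : c < d) :
    ∀ i j : Fin 4, i < j → (![a,b,c,d] : Fin 4 → α) i < ![a,b,c,d] j := by
  have h13 := h1.trans h2
  have h24 := h2.trans h3
  have h14 := h13.trans h3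
  intro i j hij
  fin_cases i <;> fin_cases j <;>
    first | exact absurd hij (by decide) | exact h1 | exact h2 | exact h3
          | exact h13 | exact h24 | exact h14

/-- Grid Ramsey theorem: for all `k, n` there is `N` such that for
every coloring `χ` of pairs of points of the `N × N` grid with `k` colors there are
`I₁, I₂ ⊆ [N]` of size `n` such that on pairs of points from `I₁ × I₂` the color of a
pair depends only on its atomic type `(otp(a₁,b₁), otp(a₂,b₂))` (recorded via
`compare`). -/
theorem stmt_10 (k n : ℕ) :
    ∃ N : ℕ, ∀ χ : (Fin N × Fin N) → (Fin N × Fin N) → Fin k,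
      ∃ I₁ I₂ : Finset (Fin N), I₁.card = n ∧ I₂.card = n ∧
        ∀ a b a' b' : Fin N × Fin N,
          a.1 ∈ I₁ → b.1 ∈ I₁ → a'.1 ∈ I₁ → b'.1 ∈ I₁ →
          a.2 ∈ I₂ → b.2 ∈ I₂ → a'.2 ∈ I₂ → b'.2 ∈ I₂ →
          compare a.1 b.1 = compare a'.1 b'.1 →
          compare a.2 b.2 = compare a'.2 b'.2 →
          χ a b = χ a' b' := by
  classical
  rcases Nat.eq_zero_or_pos k with rfl | hk
  · -- no colors: vacuous since χ cannot exist for (N₀ + 1) ≥ 1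
    refine ⟨1, fun χ => ?_⟩
    exact Fin.elim0 (χ (0, 0) (0, 0))
  obtain ⟨N₀, hN₀⟩ := ramsey 4 ((Fin 4 → Fin 4) → Fin k) (n + n + 2)
  refine ⟨N₀ + 1, fun χ => ?_⟩
  have hN0 : 0 < (N₀ + 1) := Nat.succ_pos _
  set emb : ℕ → Fin (N₀ + 1) := fun v => if h : v < (N₀ + 1) then ⟨v, h⟩ else ⟨0, hN0⟩ with hemb
  have hembv : ∀ p : Fin (N₀ + 1), emb p.val = p := by
    intro p; simp [hemb, p.isLt]; intro h; exact absurd p.isLt (by omega)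
  set f : Finset ℕ → ((Fin 4 → Fin 4) → Fin k) := fun s g =>
    χ (emb ((Finset.sort s (· ≤ ·)).getD (g 0).val 0),
       emb ((Finset.sort s (· ≤ ·)).getD (g 1).val 0))
      (emb ((Finset.sort s (· ≤ ·)).getD (g 2).val 0),
       emb ((Finset.sort s (· ≤ ·)).getD (g 3).val 0)) with hf
  obtain ⟨H, hHsub, hHcard, hHom⟩ := hN₀ f (Finset.range (N₀ + 1)) (by rw [Finset.card_range]; omega)
  have hHlt : ∀ v ∈ H, v < (N₀ + 1) := fun v hv => Finset.mem_range.mp (hHsub hv)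
  -- split H into bottom n, middle n, top 2
  obtain ⟨H₁, hH₁sub, hH₁card, hH₁lt⟩ := exists_bottom H n (by omega)
  obtain ⟨H₂, hH₂sub, hH₂card, hH₂lt⟩ := exists_bottom (H \ H₁) n
    (by rw [Finset.card_sdiff_of_subset hH₁sub]; omega)
  set E := (H \ H₁) \ H₂ with hE
  have hH'H : H \ H₁ ⊆ H := Finset.sdiff_subset
  have hH₂H : H₂ ⊆ H := hH₂sub.trans hH'H
  have hEH : E ⊆ H := Finset.sdiff_subset.trans hH'H
  have hEcard : E.card = 2 := by
    rw [hE, Finset.card_sdiff_of_subset hH₂sub, Finset.card_sdiff_of_subset hH₁sub, hHcard, hH₂card]; omega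
  have hEne : E.Nonempty := by rw [← Finset.card_pos, hEcard]; omega
  -- cross inequalities
  have h12 : ∀ x ∈ H₁, ∀ y ∈ H₂, x < y := by
    intro x hx y hy
    exact hH₁lt x hx y (hH₂sub hy)
  have h1E : ∀ x ∈ H₁, ∀ y ∈ E, x < y := by
    intro x hx y hy
    exact hH₁lt x hx y (Finset.sdiff_subset hy)
  have h2E : ∀ x ∈ H₂, ∀ y ∈ E, x < y := by
    intro x hx y hy
    exact hH₂lt x hx y hy
  set e₁ := E.min' hEne with he₁
  set e₂ := E.max' hEne with he₂
  have he₁E : e₁ ∈ E := E.min'_mem hEne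
  have he₂E : e₂ ∈ E := E.max'_mem hEne
  have he₁₂ : e₁ < e₂ := E.min'_lt_max'_of_card (by omega)
  set fe₁ : Fin (N₀ + 1) := ⟨e₁, hHlt _ (hEH he₁E)⟩ with hfe₁
  set fe₂ : Fin (N₀ + 1) := ⟨e₂, hHlt _ (hEH he₂E)⟩ with hfe₂
  -- the key homogeneity transfer lemma
  have key : ∀ (u u' : Fin 4 → Fin (N₀ + 1)) (g : Fin 4 → Fin 4),
      (∀ i, (u i).val ∈ H) → (∀ i, (u' i).val ∈ H) →
      (∀ i j : Fin 4, i < j → u i < u j) → (∀ i j : Fin 4, i < j → u' i < u' j) →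
      χ (u (g 0), u (g 1)) (u (g 2), u (g 3)) =
      χ (u' (g 0), u' (g 1)) (u' (g 2), u' (g 3)) := by
    have main : ∀ (u : Fin 4 → Fin (N₀ + 1)) (g : Fin 4 → Fin 4),
        (∀ i, (u i).val ∈ H) → (∀ i j : Fin 4, i < j → u i < u j) →
        ∃ s, s ⊆ H ∧ s.card = 4 ∧
          f s g = χ (u (g 0), u (g 1)) (u (g 2), u (g 3)) := by
      intro u g hmem hmono
      refine ⟨{(u 0).val, (u 1).val, (u 2).val, (u 3).val}, ?_, ?_, ?_⟩
      · intro v hv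
        simp only [Finset.mem_insert, Finset.mem_singleton] at hv
        rcases hv with rfl | rfl | rfl | rfl
        exacts [hmem 0, hmem 1, hmem 2, hmem 3]
      · have hs := sort4 (Fin.lt_def.mp (hmono 0 1 (by decide)))
          (Fin.lt_def.mp (hmono 1 2 (by decide))) (Fin.lt_def.mp (hmono 2 3 (by decide)))
        have := Finset.length_sort (α := ℕ) (· ≤ ·)
          (s := {(u 0).val, (u 1).val, (u 2).val, (u 3).val})
        rw [hs] at this
        simpa using this.symm
      · have hs := sort4 (Fin.lt_def.mp (hmono 0 1 (by decide)))
          (Fin.lt_def.mp (hmono 1 2 (by decide))) (Fin.lt_def.mp (hmono 2 3 (by decide)))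
        have hL : ∀ j : Fin 4, ([(u 0).val, (u 1).val, (u 2).val, (u 3).val]).getD j.val 0
            = (u j).val := by
          intro j; fin_cases j <;> rfl
        rw [hf]
        simp only [hs, hL, hembv]
    intro u u' g hm hm' hmo hmo'
    obtain ⟨s, hsH, hsc, hsf⟩ := main u g hm hmo
    obtain ⟨s', hsH', hsc', hsf'⟩ := main u' g hm' hmo'
    rw [← hsf, ← hsf']
    exact congrFun (hHom s hsH s' hsH' hsc hsc') g
  -- build I₁, I₂
  have hH₁N : ∀ m ∈ H₁, m < (N₀ + 1) := fun m hm => hHlt m (hH₁sub hm)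
  have hH₂N : ∀ m ∈ H₂, m < (N₀ + 1) := fun m hm => hHlt m (hH₂H hm)
  refine ⟨H₁.attachFin hH₁N, H₂.attachFin hH₂N, by rw [Finset.card_attachFin, hH₁card],
    by rw [Finset.card_attachFin, hH₂card], ?_⟩
  rintro ⟨x1, x2⟩ ⟨y1, y2⟩ ⟨x1', x2'⟩ ⟨y1', y2'⟩ hx1 hy1 hx1' hy1' hx2 hy2 hx2' hy2' hc1 hc2
  simp only [Finset.mem_attachFin] at hx1 hy1 hx1' hy1' hx2 hy2 hx2' hy2'
  simp only at hc1 hc2 ⊢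
  -- membership facts in H
  have mx1 : x1.val ∈ H := hH₁sub hx1
  have my1 : y1.val ∈ H := hH₁sub hy1
  have mx1' : x1'.val ∈ H := hH₁sub hx1'
  have my1' : y1'.val ∈ H := hH₁sub hy1'
  have mx2 : x2.val ∈ H := hH₂H hx2
  have my2 : y2.val ∈ H := hH₂H hy2
  have mx2' : x2'.val ∈ H := hH₂H hx2'
  have my2' : y2'.val ∈ H := hH₂H hy2'
  have me₁ : fe₁.val ∈ H := hEH he₁E
  have me₂ : fe₂.val ∈ H := hEH he₂E
  have mem4 : ∀ (p q r s : Fin (N₀ + 1)), p.val ∈ H → q.val ∈ H → r.val ∈ H → s.val ∈ H →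
      ∀ i : Fin 4, ((![p,q,r,s] : Fin 4 → Fin (N₀ + 1)) i).val ∈ H := by
    intro p q r s hp hq hr hs i
    fin_cases i <;> first | exact hp | exact hq | exact hr | exact hs
  rcases hord1 : compare x1 y1 with _ | _ | _ <;> rw [hord1] at hc1 <;>
    rcases hord2 : compare x2 y2 with _ | _ | _ <;> rw [hord2] at hc2
  · -- lt, lt
    have r1 : x1 < y1 := compare_lt_iff_lt.mp hord1
    have r1' : x1' < y1' := compare_lt_iff_lt.mp hc1.symm
    have r2 : x2 < y2 := compare_lt_iff_lt.mp hord2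
    have r2' : x2' < y2' := compare_lt_iff_lt.mp hc2.symm
    exact key ![x1, y1, x2, y2] ![x1', y1', x2', y2'] ![0, 2, 1, 3]
      (mem4 _ _ _ _ mx1 my1 mx2 my2) (mem4 _ _ _ _ mx1' my1' mx2' my2')
      (sm4 r1 (h12 _ hy1 _ hx2) r2) (sm4 r1' (h12 _ hy1' _ hx2') r2')
  · -- lt, eq
    have r1 : x1 < y1 := compare_lt_iff_lt.mp hord1
    have r1' : x1' < y1' := compare_lt_iff_lt.mp hc1.symm
    obtain rfl : x2 = y2 := compare_eq_iff_eq.mp hord2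
    obtain rfl : x2' = y2' := compare_eq_iff_eq.mp hc2.symm
    exact key ![x1, y1, x2, fe₁] ![x1', y1', x2', fe₁] ![0, 2, 1, 2]
      (mem4 _ _ _ _ mx1 my1 mx2 me₁) (mem4 _ _ _ _ mx1' my1' mx2' me₁)
      (sm4 r1 (h12 _ hy1 _ hx2) (h2E _ hx2 _ he₁E))
      (sm4 r1' (h12 _ hy1' _ hx2') (h2E _ hx2' _ he₁E))
  · -- lt, gt
    have r1 : x1 < y1 := compare_lt_iff_lt.mp hord1
    have r1' : x1' < y1' := compare_lt_iff_lt.mp hc1.symm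
    have r2 : y2 < x2 := compare_gt_iff_gt.mp hord2
    have r2' : y2' < x2' := compare_gt_iff_gt.mp hc2.symm
    exact key ![x1, y1, y2, x2] ![x1', y1', y2', x2'] ![0, 3, 1, 2]
      (mem4 _ _ _ _ mx1 my1 my2 mx2) (mem4 _ _ _ _ mx1' my1' my2' mx2')
      (sm4 r1 (h12 _ hy1 _ hy2) r2) (sm4 r1' (h12 _ hy1' _ hy2') r2')
  · -- eq, lt
    obtain rfl : x1 = y1 := compare_eq_iff_eq.mp hord1
    obtain rfl : x1' = y1' := compare_eq_iff_eq.mp hc1.symm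
    have r2 : x2 < y2 := compare_lt_iff_lt.mp hord2
    have r2' : x2' < y2' := compare_lt_iff_lt.mp hc2.symm
    exact key ![x1, x2, y2, fe₁] ![x1', x2', y2', fe₁] ![0, 1, 0, 2]
      (mem4 _ _ _ _ mx1 mx2 my2 me₁) (mem4 _ _ _ _ mx1' mx2' my2' me₁)
      (sm4 (h12 _ hx1 _ hx2) r2 (h2E _ hy2 _ he₁E))
      (sm4 (h12 _ hx1' _ hx2') r2' (h2E _ hy2' _ he₁E))
  · -- eq, eq
    obtain rfl : x1 = y1 := compare_eq_iff_eq.mp hord1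
    obtain rfl : x1' = y1' := compare_eq_iff_eq.mp hc1.symm
    obtain rfl : x2 = y2 := compare_eq_iff_eq.mp hord2
    obtain rfl : x2' = y2' := compare_eq_iff_eq.mp hc2.symm
    exact key ![x1, x2, fe₁, fe₂] ![x1', x2', fe₁, fe₂] ![0, 1, 0, 1]
      (mem4 _ _ _ _ mx1 mx2 me₁ me₂) (mem4 _ _ _ _ mx1' mx2' me₁ me₂)
      (sm4 (h12 _ hx1 _ hx2) (h2E _ hx2 _ he₁E) he₁₂)
      (sm4 (h12 _ hx1' _ hx2') (h2E _ hx2' _ he₁E) he₁₂)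
  · -- eq, gt
    obtain rfl : x1 = y1 := compare_eq_iff_eq.mp hord1
    obtain rfl : x1' = y1' := compare_eq_iff_eq.mp hc1.symm
    have r2 : y2 < x2 := compare_gt_iff_gt.mp hord2
    have r2' : y2' < x2' := compare_gt_iff_gt.mp hc2.symm
    exact key ![x1, y2, x2, fe₁] ![x1', y2', x2', fe₁] ![0, 2, 0, 1]
      (mem4 _ _ _ _ mx1 my2 mx2 me₁) (mem4 _ _ _ _ mx1' my2' mx2' me₁)
      (sm4 (h12 _ hx1 _ hy2) r2 (h2E _ hx2 _ he₁E))
      (sm4 (h12 _ hx1' _ hy2') r2' (h2E _ hx2' _ he₁E))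
  · -- gt, lt
    have r1 : y1 < x1 := compare_gt_iff_gt.mp hord1
    have r1' : y1' < x1' := compare_gt_iff_gt.mp hc1.symm
    have r2 : x2 < y2 := compare_lt_iff_lt.mp hord2
    have r2' : x2' < y2' := compare_lt_iff_lt.mp hc2.symm
    exact key ![y1, x1, x2, y2] ![y1', x1', x2', y2'] ![1, 2, 0, 3]
      (mem4 _ _ _ _ my1 mx1 mx2 my2) (mem4 _ _ _ _ my1' mx1' mx2' my2')
      (sm4 r1 (h12 _ hx1 _ hx2) r2) (sm4 r1' (h12 _ hx1' _ hx2') r2')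
  · -- gt, eq
    have r1 : y1 < x1 := compare_gt_iff_gt.mp hord1
    have r1' : y1' < x1' := compare_gt_iff_gt.mp hc1.symm
    obtain rfl : x2 = y2 := compare_eq_iff_eq.mp hord2
    obtain rfl : x2' = y2' := compare_eq_iff_eq.mp hc2.symm
    exact key ![y1, x1, x2, fe₁] ![y1', x1', x2', fe₁] ![1, 2, 0, 2]
      (mem4 _ _ _ _ my1 mx1 mx2 me₁) (mem4 _ _ _ _ my1' mx1' mx2' me₁)
      (sm4 r1 (h12 _ hx1 _ hx2) (h2E _ hx2 _ he₁E))
      (sm4 r1' (h12 _ hx1' _ hx2') (h2E _ hx2' _ he₁E))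
  · -- gt, gt
    have r1 : y1 < x1 := compare_gt_iff_gt.mp hord1
    have r1' : y1' < x1' := compare_gt_iff_gt.mp hc1.symm
    have r2 : y2 < x2 := compare_gt_iff_gt.mp hord2
    have r2' : y2' < x2' := compare_gt_iff_gt.mp hc2.symm
    exact key ![y1, x1, y2, x2] ![y1', x1', y2', x2'] ![1, 3, 0, 2]
      (mem4 _ _ _ _ my1 mx1 my2 mx2) (mem4 _ _ _ _ my1' mx1' my2' mx2')
      (sm4 r1 (h12 _ hx1 _ hy2) r2) (sm4 r1' (h12 _ hx1' _ hy2') r2')
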